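/- There exists a topological space that is k₂-Hausdorff but not weakly Hausdorff; that is, a space X whose diagonal is k₂-closed in X × X, yet for some compact Hausdorff space K and continuous map f : K → X the image f[K] is not closed in X. -/

import Mathlib

open Set Filter Topology

universe u

/-- A subset `C` of a space `X` is k₁-closed provided for every compact subset `K` of `X`,
the intersection `C ∩ K` is closed in the subspace topology on `K`. -/
def IsK1Closed {X : Type u} [TopologicalSpace X] (C : Set X) : Prop :=
  ∀ K : Set X, IsCompact K → IsClosed ((Subtype.val : K → X) ⁻¹' C)

/-- A space is k₁-Hausdorff provided its diagonal is k₁-closed in its square. -/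
def K1Hausdorff (X : Type u) [TopologicalSpace X] : Prop :=
  IsK1Closed {p : X × X | p.1 = p.2}

/-- A space is KC provided every compact subset is closed. -/
def KCSpace (X : Type u) [TopologicalSpace X] : Prop :=
  ∀ K : Set X, IsCompact K → IsClosed K

/-- A space `X` is weakly Hausdorff provided for every compact Hausdorff space `K` and
continuous `f : K → X`, the image of `f` is closed in `X`. -/
def WeaklyHausdorff (X : Type u) [TopologicalSpace X] : Prop :=
  ∀ (K : Type u) [TopologicalSpace K] [CompactSpace K] [T2Space K]
    (f : K → X), Continuous f → IsClosed (Set.range f)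

/-- A subset `C` of `X` is k₂-closed provided for every compact Hausdorff space `K` and
continuous `f : K → X`, the preimage `f ⁻¹' C` is closed in `K`. -/
def IsK2Closed {X : Type u} [TopologicalSpace X] (C : Set X) : Prop :=
  ∀ (K : Type u) [TopologicalSpace K] [CompactSpace K] [T2Space K]
    (f : K → X), Continuous f → IsClosed (f ⁻¹' C)

/-- A space is k₂-Hausdorff provided its diagonal is k₂-closed in its square. -/
def K2Hausdorff (X : Type u) [TopologicalSpace X] : Prop :=
  IsK2Closed {p : X × X | p.1 = p.2}

/-- A space has unique sequential limits provided every convergent sequence has a unique limit. -/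
def UniqueSequentialLimits (X : Type u) [TopologicalSpace X] : Prop :=
  ∀ (a : ℕ → X) (l₀ l₁ : X),
    Filter.Tendsto a Filter.atTop (nhds l₀) →
    Filter.Tendsto a Filter.atTop (nhds l₁) → l₀ = l₁

namespace K2NotWH


/-- The topology on `Option ℝ` in which real opens are Euclidean opens, and a set
containing `none` is open iff its real trace is open and dense. -/
instance optTop : TopologicalSpace (Option ℝ) where
  IsOpen V := IsOpen (some ⁻¹' V) ∧ (none ∈ V → Dense (some ⁻¹' V))
  isOpen_univ := ⟨by simpa using isOpen_univ, fun _ => by simpa using dense_univ⟩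
  isOpen_inter := by
    intro A B hA hB
    constructor
    · rw [preimage_inter]; exact hA.1.inter hB.1
    · intro hn
      rw [preimage_inter]
      exact (hA.2 hn.1).inter_of_isOpen_left (hB.2 hn.2) hA.1
  isOpen_sUnion := by
    intro S hS
    constructor
    · rw [preimage_sUnion]
      exact isOpen_biUnion fun V hV => (hS V hV).1
    · rintro ⟨V, hVS, hnV⟩
      refine ((hS V hVS).2 hnV).mono ?_
      rw [preimage_sUnion]
      exact subset_biUnion_of_mem (u := fun V => some ⁻¹' V) hVS

lemma isOpen_opt_iff {V : Set (Option ℝ)} :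
    IsOpen V ↔ IsOpen (some ⁻¹' V) ∧ (none ∈ V → Dense (some ⁻¹' V)) := Iff.rfl

lemma isOpen_some_image {U : Set ℝ} (hU : IsOpen U) :
    IsOpen (some '' U : Set (Option ℝ)) := by
  rw [isOpen_opt_iff]
  constructor
  · rwa [preimage_image_eq U (Option.some_injective ℝ)]
  · intro hn; exact absurd hn (by simp)

lemma isOpen_insert_none {U : Set ℝ} (hU : IsOpen U) (hD : Dense U) :
    IsOpen (insert none (some '' U) : Set (Option ℝ)) := by
  have hpre : some ⁻¹' (insert none (some '' U) : Set (Option ℝ)) = U := by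
    ext x; simp
  rw [isOpen_opt_iff, hpre]
  exact ⟨hU, fun _ => hD⟩

lemma continuous_some : Continuous (some : ℝ → Option ℝ) :=
  continuous_def.mpr fun V hV => hV.1

lemma isOpen_ne_some (r : ℝ) : IsOpen {p : Option ℝ | p ≠ some r} := by
  rw [isOpen_opt_iff]
  have hpre : some ⁻¹' {p : Option ℝ | p ≠ some r} = {r}ᶜ := by
    ext x; simp
  rw [hpre]
  exact ⟨isOpen_compl_singleton, fun _ => dense_compl_singleton r⟩

variable {K : Type} [TopologicalSpace K] [CompactSpace K] [T2Space K]

/-- The core lemma: no compact Hausdorff probe can witness agreement clustering at a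
point where one map is `none` and the other is real. -/
lemma no_mixed (g h : K → Option ℝ) (hg : Continuous g) (hh : Continuous h)
    (k₀ : K) (hcl : ∀ U ∈ 𝓝 k₀, (U ∩ {k | g k = h k}).Nonempty)
    (r : ℝ) (hg0 : g k₀ = none) (hh0 : h k₀ = some r) : False := by
  -- a closed neighborhood of k₀ on which g avoids `some r`
  have hVmem : g ⁻¹' {p | p ≠ some r} ∈ 𝓝 k₀ :=
    ((isOpen_ne_some r).preimage hg).mem_nhds (by simp [hg0])
  obtain ⟨Cl, hClmem, hClclosed, hClsub⟩ := exists_mem_nhds_isClosed_subset hVmem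
  -- choose witnesses
  have key : ∀ n : ℕ, ∃ (k : K) (z : ℝ), k ∈ Cl ∧ g k = some z ∧ h k = some z ∧
      dist z r < 1 / (n + 1) ∧ z ≠ r := by
    intro n
    have hpos : (0 : ℝ) < 1 / (n + 1) := by positivity
    have hball : IsOpen (some '' Metric.ball r (1 / (n + 1)) : Set (Option ℝ)) :=
      isOpen_some_image Metric.isOpen_ball
    have hmem : Cl ∩ h ⁻¹' (some '' Metric.ball r (1 / (n + 1))) ∈ 𝓝 k₀ := by
      refine inter_mem hClmem ((hball.preimage hh).mem_nhds ?_)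
      rw [mem_preimage, hh0]
      exact mem_image_of_mem _ (Metric.mem_ball_self hpos)
    obtain ⟨k, ⟨hkCl, hkb⟩, hkE⟩ := hcl _ hmem
    obtain ⟨z, hzball, hzeq⟩ := hkb
    have hhk : h k = some z := hzeq.symm
    have hgk : g k = some z := hkE.trans hhk
    have hzr : z ≠ r := by
      intro hzr'
      exact (hClsub hkCl) (by rw [hgk, hzr'])
    exact ⟨k, z, hkCl, hgk, hhk, Metric.mem_ball.mp hzball, hzr⟩
  choose k z hkCl hgk hhk hdist hzr using key
  have hz_tendsto : Tendsto z atTop (𝓝 r) := by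
    rw [tendsto_iff_dist_tendsto_zero]
    exact squeeze_zero (fun n => dist_nonneg) (fun n => (hdist n).le)
      tendsto_one_div_add_atTop_nhds_zero_nat
  set C : Set ℝ := insert r (Set.range z) with hC
  have hCclosed : IsClosed C := hz_tendsto.isCompact_insert_range.isClosed
  have hCcount : C.Countable := (countable_range z).insert r
  have hDopen : IsOpen (insert none (some '' Cᶜ) : Set (Option ℝ)) :=
    isOpen_insert_none hCclosed.isOpen_compl (hCcount.dense_compl ℝ)
  -- a cluster point of the sequence k
  obtain ⟨x, hxM⟩ := exists_clusterPt_of_compactSpace (map k atTop)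
  have hxM : MapClusterPt x atTop k := hxM
  have hxCl : x ∈ Cl := by
    have h1 : ClusterPt x (𝓟 Cl) :=
      hxM.clusterPt.mono (le_principal_iff.mpr (mem_map.mpr (Eventually.of_forall hkCl)))
    have := mem_closure_iff_clusterPt.mpr h1
    rwa [hClclosed.closure_eq] at this
  have hgx : MapClusterPt (g x) atTop (g ∘ k) := hxM.continuousAt_comp hg.continuousAt
  have hgk' : (g ∘ k) = fun n => (some (z n) : Option ℝ) := funext fun n => hgk n
  rw [hgk'] at hgx
  cases hgxval : g x with
  | none =>
    rw [hgxval] at hgx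
    have hfreq := (mapClusterPt_iff_frequently.mp hgx) (insert none (some '' Cᶜ))
      (hDopen.mem_nhds (mem_insert _ _))
    obtain ⟨n, hn⟩ := hfreq.exists
    have hzn : z n ∈ Cᶜ := by
      rcases hn with hn | hn
      · exact absurd hn (by simp)
      · obtain ⟨w, hw, hweq⟩ := hn
        rwa [← Option.some_injective ℝ hweq]
    exact hzn (mem_insert_iff.mpr (Or.inr (mem_range_self n)))
  | some y =>
    rw [hgxval] at hgx
    have hyr : y = r := by
      by_contra hne
      obtain ⟨U, Vv, hU, hVv, hyU, hrV, hdisj⟩ := t2_separation hne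
      have hfreq := (mapClusterPt_iff_frequently.mp hgx) (some '' U)
        ((isOpen_some_image hU).mem_nhds (mem_image_of_mem _ hyU))
      have hev : ∀ᶠ n in atTop, z n ∈ Vv := hz_tendsto (hVv.mem_nhds hrV)
      obtain ⟨n, hn1, hn2⟩ := (hfreq.and_eventually hev).exists
      obtain ⟨u, huU, hueq⟩ := hn1
      exact (disjoint_left.mp hdisj ((Option.some_injective ℝ hueq) ▸ huU)) hn2
    exact (hClsub hxCl) (show g x = some r by rw [hgxval, hyr])


lemma k2H_optReal : K2Hausdorff (Option ℝ) := by
  intro K _ _ _ f hf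
  rw [isClosed_iff_clusterPt]
  intro k₀ hk₀
  have hg : Continuous fun k => (f k).1 := continuous_fst.comp hf
  have hh : Continuous fun k => (f k).2 := continuous_snd.comp hf
  have hcl : ∀ U ∈ 𝓝 k₀, (U ∩ {k | (f k).1 = (f k).2}).Nonempty := fun U hU =>
    clusterPt_principal_iff.mp hk₀ U hU
  show (f k₀).1 = (f k₀).2
  cases hG : (f k₀).1 with
  | none =>
    cases hH : (f k₀).2 with
    | none => rfl
    | some r => exact (no_mixed _ _ hg hh k₀ hcl r hG hH).elim
  | some a =>
    cases hH : (f k₀).2 with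
    | none =>
      have hcl' : ∀ U ∈ 𝓝 k₀, (U ∩ {k | (f k).2 = (f k).1}).Nonempty := fun U hU => by
        obtain ⟨kk, hkU, hkE⟩ := hcl U hU
        exact ⟨kk, hkU, hkE.symm⟩
      exact (no_mixed _ _ hh hg k₀ hcl' a hH hG).elim
    | some b =>
      rcases eq_or_ne a b with he | hne
      · rw [he]
      · exfalso
        obtain ⟨U, V, hU, hV, haU, hbV, hdisj⟩ := t2_separation hne
        have hW : (fun k => (f k).1) ⁻¹' (some '' U) ∩
            (fun k => (f k).2) ⁻¹' (some '' V) ∈ 𝓝 k₀ := by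
          refine inter_mem (((isOpen_some_image hU).preimage hg).mem_nhds ?_)
            (((isOpen_some_image hV).preimage hh).mem_nhds ?_)
          · rw [mem_preimage, hG]; exact mem_image_of_mem _ haU
          · rw [mem_preimage, hH]; exact mem_image_of_mem _ hbV
        obtain ⟨kk, ⟨h1, h2⟩, hE⟩ := hcl _ hW
        obtain ⟨u, huU, hueq⟩ := h1
        obtain ⟨v, hvV, hveq⟩ := h2
        have huv : u = v := Option.some_injective ℝ (hueq.trans (hE.trans hveq.symm))
        exact disjoint_left.mp hdisj huU (by rwa [huv])

lemma not_closed_range :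
    ¬ IsClosed (Set.range fun t : ↥(Set.Icc (0:ℝ) 1) => (some t.val : Option ℝ)) := by
  intro hclosed
  have hopen := hclosed.isOpen_compl
  rw [isOpen_opt_iff] at hopen
  have hnone : (none : Option ℝ) ∈
      (Set.range fun t : ↥(Set.Icc (0:ℝ) 1) => (some t.val : Option ℝ))ᶜ := by
    simp
  have hdense := hopen.2 hnone
  have hpre : some ⁻¹' (Set.range fun t : ↥(Set.Icc (0:ℝ) 1) => (some t.val : Option ℝ))ᶜ
      = (Set.Icc (0:ℝ) 1)ᶜ := by
    ext x
    simp [Subtype.exists]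
  rw [hpre] at hdense
  obtain ⟨x, hxO, hxC⟩ := hdense.exists_mem_open isOpen_Ioo
    (nonempty_Ioo.mpr (by norm_num : (0:ℝ) < 1))
  exact hxO (Ioo_subset_Icc_self hxC)

end K2NotWH

/-- There is a k₂-Hausdorff space that is not weakly Hausdorff. -/
theorem exists_k2Hausdorff_not_weaklyHausdorff :
    ∃ (X : Type) (_ : TopologicalSpace X), K2Hausdorff X ∧
      ∃ (K : Type) (_ : TopologicalSpace K) (_ : CompactSpace K) (_ : T2Space K)
        (f : K → X), Continuous f ∧ ¬ IsClosed (Set.range f) := by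
  refine ⟨Option ℝ, inferInstance, K2NotWH.k2H_optReal,
    ↥(Set.Icc (0:ℝ) 1), inferInstance, isCompact_iff_compactSpace.mp isCompact_Icc,
    inferInstance, fun t => some t.val,
    K2NotWH.continuous_some.comp continuous_subtype_val, K2NotWH.not_closed_range⟩
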